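/- Let n ≥ p ≥ 1, let F : ℝ^{n×p} → ℝ be twice continuously differentiable, let X ∈ ℝ^{n×p} satisfy XᵀX = I_p, and let Q ∈ ℝ^{n×n} be orthogonal with first p columns equal to X. Let Λ = {Q(E_{ij} − E_{ji}) : 1 ≤ i < j ≤ p} ∪ {Q E_{ij} : p < i ≤ n, 1 ≤ j ≤ p}, and let G ∈ ℝ^{n×p} have entries G_{ij} = ∂_{ij}F(X). Then ∑_{U ∈ Λ} [ D²F(X)[U,U] + tr(Gᵀ U Xᵀ U) − (1/2) tr((XᵀG + GᵀX) Uᵀ (I_n − X Xᵀ) U) ] = ∑_{i=1}^{n} ∑_{j=1}^{p} ∂²_{ij}F(X) − ∑_{i,u=1}^{n} ∑_{j,v=1}^{p} X_{iv} X_{uj} ∂_{ij}∂_{uv}F(X) − (n−1) ∑_{i=1}^{n} ∑_{j=1}^{p} X_{ij} ∂_{ij}F(X). -/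

import Mathlib

open Matrix

attribute [local instance] Matrix.normedAddCommGroup Matrix.normedSpace

/-- Basis element `Q(E_{ij} - E_{ji})` for `i < j ≤ p`. -/
def stiefelBasis₁ {n p : ℕ} (hpn : p ≤ n) (Q : Matrix (Fin n) (Fin n) ℝ)
    (i j : Fin p) : Matrix (Fin n) (Fin p) ℝ :=
  Q * (Matrix.single (Fin.castLE hpn i) j (1 : ℝ)
    - Matrix.single (Fin.castLE hpn j) i (1 : ℝ))

/-- Basis element `Q E_{ij}` for `i > p`. -/
def stiefelBasis₂ {n p : ℕ} (Q : Matrix (Fin n) (Fin n) ℝ)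
    (i : Fin n) (j : Fin p) : Matrix (Fin n) (Fin p) ℝ :=
  Q * Matrix.single i j (1 : ℝ)

/-- The Riemannian Hessian of `F` at `X` (canonical metric, Edelman–Arias–Smith
formula) evaluated on the tangent vector `U`, where `G` is the matrix of Euclidean
partial derivatives of `F` at `X`. -/
noncomputable def riemannianHessianQF {n p : ℕ}
    (F : Matrix (Fin n) (Fin p) ℝ → ℝ) (X G U : Matrix (Fin n) (Fin p) ℝ) : ℝ :=
  iteratedFDeriv ℝ 2 F X ![U, U]
    + Matrix.trace (Gᵀ * U * Xᵀ * U)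
    - (1/2 : ℝ) * Matrix.trace ((Xᵀ * G + Gᵀ * X) * Uᵀ
        * ((1 : Matrix (Fin n) (Fin n) ℝ) - X * Xᵀ) * U)

/-! ### Auxiliary lemmas on bilinearity of the second iterated derivative -/

section Aux
set_option linter.unusedSectionVars false
variable {E : Type*} [NormedAddCommGroup E] [NormedSpace ℝ E]

lemma vec2_update0 (a b x : E) : Function.update ![a,b] 0 x = ![x,b] := by
  ext k; fin_cases k <;> rfl

lemma vec2_update1 (a b y : E) : Function.update ![a,b] 1 y = ![a,y] := by
  have h1 : (1 : Fin 2) = (0 : Fin 1).succ := rfl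
  rw [Matrix.vecCons, h1, ← Fin.cons_update]
  ext k; fin_cases k <;> rfl

variable (f : ContinuousMultilinearMap ℝ (fun _ : Fin 2 => E) ℝ)

lemma f2_addL (a a' b : E) : f ![a + a', b] = f ![a, b] + f ![a', b] := by
  simpa [vec2_update0] using f.map_update_add ![a, b] 0 a a'

lemma f2_smulL (c : ℝ) (a b : E) : f ![c • a, b] = c * f ![a, b] := by
  simpa [vec2_update0] using f.map_update_smul ![a, b] 0 c a

lemma f2_addR (a b b' : E) : f ![a, b + b'] = f ![a, b] + f ![a, b'] := by
  simpa [vec2_update1] using f.map_update_add ![a, b] 1 b b'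

lemma f2_smulR (c : ℝ) (a b : E) : f ![a, c • b] = c * f ![a, b] := by
  simpa [vec2_update1] using f.map_update_smul ![a, b] 1 c b

lemma f2_subL (a a' b : E) : f ![a - a', b] = f ![a, b] - f ![a', b] := by
  have := f2_addL f a' (a - a') b
  simp only [add_sub_cancel] at this
  linarith

lemma f2_subR (a b b' : E) : f ![a, b - b'] = f ![a, b] - f ![a, b'] := by
  have := f2_addR f a b' (b - b')
  simp only [add_sub_cancel] at this
  linarith

lemma f2_sumL {ι : Type*} (s : Finset ι) (g : ι → E) (b : E) :
    f ![∑ i ∈ s, g i, b] = ∑ i ∈ s, f ![g i, b] := by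
  classical
  induction s using Finset.induction with
  | empty => simpa using f.map_coord_zero (m := ![(0:E), b]) 0 (by simp)
  | insert _ _ hne ih => simp [Finset.sum_insert hne, f2_addL, ih]

lemma f2_sumR {ι : Type*} (s : Finset ι) (a : E) (g : ι → E) :
    f ![a, ∑ i ∈ s, g i] = ∑ i ∈ s, f ![a, g i] := by
  classical
  induction s using Finset.induction with
  | empty => simpa using f.map_coord_zero (m := ![a, (0:E)]) 1 (by simp)
  | insert _ _ hne ih => simp [Finset.sum_insert hne, f2_addR, ih]

lemma f2_expand {ι κ : Type*} [Fintype ι] [Fintype κ]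
    (c : ι → ℝ) (x : ι → E) (d : κ → ℝ) (y : κ → E) :
    f ![∑ i, c i • x i, ∑ j, d j • y j]
      = ∑ i, ∑ j, c i * d j * f ![x i, y j] := by
  rw [f2_sumL]
  refine Finset.sum_congr rfl fun i _ => ?_
  rw [f2_smulL, f2_sumR, Finset.mul_sum]
  refine Finset.sum_congr rfl fun j _ => ?_
  rw [f2_smulR]; ring

end Aux

/-! ### Auxiliary summation lemmas -/

lemma sum_ite_lt {q : ℕ} (f : Fin q → Fin q → ℝ) :
    ∑ i, ∑ j, (if i < j then f i j + f j i else 0)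
      = (∑ i, ∑ j, f i j) - ∑ i, f i i := by
  have h1 : ∀ i j : Fin q, (if i < j then f i j + f j i else 0)
      = (if i < j then f i j else 0) + (if i < j then f j i else 0) := by
    intro i j; split <;> simp
  simp only [h1, Finset.sum_add_distrib]
  have h2 : ∑ i : Fin q, ∑ j : Fin q, (if i < j then f j i else 0)
      = ∑ i : Fin q, ∑ j : Fin q, (if j < i then f i j else 0) := by
    rw [Finset.sum_comm]
  rw [h2, ← Finset.sum_add_distrib]
  simp only [← Finset.sum_add_distrib]
  have h3 : ∀ i j : Fin q, ((if i < j then f i j else 0) + (if j < i then f i j else 0))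
      = f i j - (if i = j then f i j else 0) := by
    intro i j
    rcases lt_trichotomy i j with h | h | h
    · simp [h, not_lt.2 h.le, h.ne]
    · simp [h]
    · simp [h, not_lt.2 h.le, h.ne']
  simp only [h3, Finset.sum_sub_distrib]
  congr 1
  refine Finset.sum_congr rfl fun i _ => ?_
  simp

lemma sum_fin_lt {n p : ℕ} (hp : 0 < p) (hpn : p ≤ n) (h : Fin n → ℝ) :
    ∑ i : Fin n, (if (i : ℕ) < p then h i else 0)
      = ∑ i : Fin p, h (Fin.castLE hpn i) := by
  rw [← Finset.sum_filter]
  have := Finset.sum_nbij' (s := (Finset.univ : Finset (Fin p)))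
    (t := Finset.univ.filter (fun i : Fin n => (i : ℕ) < p))
    (f := fun a : Fin p => h (Fin.castLE hpn a)) (g := h)
    (i := fun a : Fin p => Fin.castLE hpn a)
    (j := fun b : Fin n => (⟨(b : ℕ) % p, Nat.mod_lt _ hp⟩ : Fin p))
    (fun a _ => by simp [a.isLt]) (fun b hb => Finset.mem_univ _)
    (fun a _ => by ext; simp [Nat.mod_eq_of_lt a.isLt])
    (fun b hb => by simp at hb; ext; simp [Nat.mod_eq_of_lt hb])
    (fun a _ => rfl)
  exact this.symm

lemma sum_swap4 {A B : Type*} [Fintype A] [Fintype B] (f : A → A → B → B → ℝ) :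
    ∑ i : A, ∑ j : A, ∑ a : B, ∑ u : B, f i j a u
      = ∑ a : B, ∑ u : B, ∑ i : A, ∑ j : A, f i j a u := by
  have h1 : ∀ i : A, ∑ j : A, ∑ a : B, ∑ u : B, f i j a u
      = ∑ a : B, ∑ u : B, ∑ j : A, f i j a u := by
    intro i
    rw [Finset.sum_comm]
    exact Finset.sum_congr rfl fun a _ => Finset.sum_comm
  rw [Finset.sum_congr rfl fun i _ => h1 i, Finset.sum_comm]
  exact Finset.sum_congr rfl fun a _ => Finset.sum_comm

/-! ### Standard basis matrix lemmas -/

lemma stdBM_transpose {n p : ℕ} (i : Fin n) (j : Fin p) (c : ℝ) :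
    (Matrix.single i j c)ᵀ = Matrix.single j i c := by
  ext a b; simp [Matrix.single, Matrix.transpose_apply, and_comm]

lemma trace_mul_stdBM {p : ℕ} (M : Matrix (Fin p) (Fin p) ℝ) (j k : Fin p) :
    Matrix.trace (M * Matrix.single j k (1:ℝ)) = M k j := by
  simp [Matrix.trace, Matrix.diag, Matrix.mul_apply, Matrix.single,
    mul_ite, ite_and, Finset.sum_ite_eq]

lemma stdBM_mul {p n q : ℕ} (i : Fin p) (j : Fin n) (k : Fin n) (l : Fin q) :
    Matrix.single i j (1:ℝ) * Matrix.single k l (1:ℝ)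
      = if j = k then Matrix.single i l (1:ℝ) else 0 := by
  ext a b
  by_cases h : j = k
  · subst h
    simp only [Matrix.mul_apply, Matrix.single, Matrix.of_apply, mul_ite, ite_and,
      mul_one, mul_zero, if_pos rfl, Finset.sum_ite_eq, Finset.mem_univ, if_true]
    split_ifs <;> simp_all
  · simp only [Matrix.mul_apply, Matrix.single, Matrix.of_apply, mul_ite, ite_and,
      mul_one, mul_zero, if_neg h, Matrix.zero_apply]
    refine Finset.sum_eq_zero fun x _ => ?_
    split_ifs with h1 h2 h3 <;> simp_all

/-! ### Structure of the basis elements -/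

lemma basis2_eq_sum {n p : ℕ} (Q : Matrix (Fin n) (Fin n) ℝ) (i : Fin n) (j : Fin p) :
    stiefelBasis₂ Q i j = ∑ a : Fin n, Q a i • Matrix.single a j (1:ℝ) := by
  ext a b
  simp [stiefelBasis₂, Matrix.mul_apply, Matrix.single, Matrix.sum_apply,
    mul_ite, ite_and, Finset.sum_ite_eq, Finset.sum_ite_eq']

lemma xT_basis2 {n p : ℕ} (hpn : p ≤ n)
    (X : Matrix (Fin n) (Fin p) ℝ)
    (Q : Matrix (Fin n) (Fin n) ℝ) (hQ : Qᵀ * Q = 1)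
    (hQX : ∀ (i : Fin n) (j : Fin p), Q i (Fin.castLE hpn j) = X i j)
    (i : Fin n) (j : Fin p) (hi : p ≤ (i : ℕ)) :
    Xᵀ * stiefelBasis₂ Q i j = 0 := by
  have hQe : ∀ a b : Fin n, ∑ k : Fin n, Q k a * Q k b = if a = b then 1 else 0 := by
    intro a b
    have := congrFun (congrFun hQ a) b
    simpa [Matrix.mul_apply, Matrix.transpose_apply, Matrix.one_apply] using this
  ext b c
  simp only [Matrix.mul_apply, stiefelBasis₂, Matrix.transpose_apply, Matrix.zero_apply,
    Matrix.single, Matrix.of_apply, mul_ite, ite_and, mul_one, mul_zero]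
  simp only [Finset.sum_ite_eq, Finset.mem_univ, if_true]
  rcases eq_or_ne j c with rfl | hjc
  · simp only [if_pos rfl]
    have h1 : ∀ a : Fin n, X a b = Q a (Fin.castLE hpn b) := fun a => (hQX a b).symm
    simp only [h1, if_true]
    rw [hQe]
    have : (Fin.castLE hpn b) ≠ i := by
      intro h
      have : ((Fin.castLE hpn b : Fin n) : ℕ) = (i : ℕ) := by rw [h]
      simp at this; omega
    simp [this]
  · simp [hjc]

lemma riem_basis2 {n p : ℕ} (hpn : p ≤ n)
    (F : Matrix (Fin n) (Fin p) ℝ → ℝ)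
    (X : Matrix (Fin n) (Fin p) ℝ)
    (Q : Matrix (Fin n) (Fin n) ℝ) (hQ : Qᵀ * Q = 1)
    (hQX : ∀ (i : Fin n) (j : Fin p), Q i (Fin.castLE hpn j) = X i j)
    (G : Matrix (Fin n) (Fin p) ℝ)
    (i : Fin n) (j : Fin p) (hi : p ≤ (i : ℕ)) :
    riemannianHessianQF F X G (stiefelBasis₂ Q i j)
      = (∑ a : Fin n, ∑ u : Fin n, Q a i * Q u i *
          iteratedFDeriv ℝ 2 F X ![Matrix.single a j 1, Matrix.single u j 1])
        - ∑ a : Fin n, X a j * G a j := by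
  set U := stiefelBasis₂ Q i j with hU
  have hXU : Xᵀ * U = 0 := xT_basis2 hpn X Q hQ hQX i j hi
  have hUX : Uᵀ * X = 0 := by
    have := congrArg Matrix.transpose hXU
    simpa [Matrix.transpose_mul] using this
  have hHess : iteratedFDeriv ℝ 2 F X ![U, U]
      = ∑ a : Fin n, ∑ u : Fin n, Q a i * Q u i *
          iteratedFDeriv ℝ 2 F X ![Matrix.single a j 1, Matrix.single u j 1] := by
    rw [hU, basis2_eq_sum]
    exact f2_expand _ _ _ _ _
  have hTr1 : Matrix.trace (Gᵀ * U * Xᵀ * U) = 0 := by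
    rw [Matrix.mul_assoc (Gᵀ * U), hXU, Matrix.mul_zero, Matrix.trace_zero]
  have hUU : Uᵀ * U = Matrix.single j j (1:ℝ) := by
    rw [hU]
    show (Q * Matrix.single i j (1:ℝ))ᵀ * (Q * Matrix.single i j (1:ℝ)) = _
    rw [Matrix.transpose_mul, stdBM_transpose, Matrix.mul_assoc,
      ← Matrix.mul_assoc Qᵀ, hQ, Matrix.one_mul, stdBM_mul, if_pos rfl]
  have hmid : Uᵀ * ((1 : Matrix (Fin n) (Fin n) ℝ) - X * Xᵀ) * U
      = Matrix.single j j (1:ℝ) := by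
    rw [Matrix.mul_sub, Matrix.mul_one, Matrix.sub_mul, hUU]
    have : Uᵀ * (X * Xᵀ) * U = 0 := by
      rw [← Matrix.mul_assoc Uᵀ X, hUX, Matrix.zero_mul, Matrix.zero_mul]
    rw [this, sub_zero]
  have hTr2 : Matrix.trace ((Xᵀ * G + Gᵀ * X) * Uᵀ
        * ((1 : Matrix (Fin n) (Fin n) ℝ) - X * Xᵀ) * U)
      = 2 * ∑ a : Fin n, X a j * G a j := by
    rw [Matrix.mul_assoc (Xᵀ * G + Gᵀ * X), Matrix.mul_assoc (Xᵀ * G + Gᵀ * X),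
      hmid, trace_mul_stdBM]
    simp [Matrix.add_apply, Matrix.mul_apply, Matrix.transpose_apply]
    rw [← Finset.sum_add_distrib]
    rw [Finset.mul_sum]
    refine Finset.sum_congr rfl fun a _ => by ring
  rw [riemannianHessianQF, hHess, hTr1, hTr2]
  ring

lemma basis1_eq_X {n p : ℕ} (hpn : p ≤ n)
    (X : Matrix (Fin n) (Fin p) ℝ) (Q : Matrix (Fin n) (Fin n) ℝ)
    (hQX : ∀ (i : Fin n) (j : Fin p), Q i (Fin.castLE hpn j) = X i j)
    (i j : Fin p) :
    stiefelBasis₁ hpn Q i j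
      = X * (Matrix.single i j (1:ℝ) - Matrix.single j i (1:ℝ)) := by
  ext a b
  simp only [stiefelBasis₁, Matrix.mul_apply, Matrix.sub_apply, Matrix.single,
    Matrix.of_apply, mul_sub, Finset.sum_sub_distrib, mul_ite, ite_and, mul_one, mul_zero]
  simp only [Finset.sum_ite_eq, Finset.mem_univ, if_true]
  by_cases hjb : j = b <;> by_cases hib : i = b <;> simp_all [hQX]

lemma basis1_eq_sum {n p : ℕ} (hpn : p ≤ n)
    (X : Matrix (Fin n) (Fin p) ℝ) (Q : Matrix (Fin n) (Fin n) ℝ)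
    (hQX : ∀ (i : Fin n) (j : Fin p), Q i (Fin.castLE hpn j) = X i j)
    (i j : Fin p) :
    stiefelBasis₁ hpn Q i j
      = (∑ a : Fin n, X a i • Matrix.single a j (1:ℝ))
        - (∑ a : Fin n, X a j • Matrix.single a i (1:ℝ)) := by
  rw [basis1_eq_X hpn X Q hQX]
  ext a b
  simp only [Matrix.mul_apply, Matrix.sub_apply, Matrix.sum_apply, Matrix.smul_apply,
    Matrix.single, Matrix.of_apply, mul_sub, Finset.sum_sub_distrib, mul_ite,
    ite_and, mul_one, mul_zero, smul_ite, smul_eq_mul, smul_zero]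
  simp only [Finset.sum_ite_eq, Finset.sum_ite_eq', Finset.mem_univ, if_true]

lemma riem_basis1 {n p : ℕ} (hpn : p ≤ n)
    (F : Matrix (Fin n) (Fin p) ℝ → ℝ)
    (X : Matrix (Fin n) (Fin p) ℝ) (hX : Xᵀ * X = 1)
    (Q : Matrix (Fin n) (Fin n) ℝ)
    (hQX : ∀ (i : Fin n) (j : Fin p), Q i (Fin.castLE hpn j) = X i j)
    (G : Matrix (Fin n) (Fin p) ℝ)
    (i j : Fin p) (hij : i ≠ j) :
    riemannianHessianQF F X G (stiefelBasis₁ hpn Q i j)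
      = (∑ a : Fin n, ∑ u : Fin n, X a i * X u i *
          iteratedFDeriv ℝ 2 F X ![Matrix.single a j 1, Matrix.single u j 1])
        + (∑ a : Fin n, ∑ u : Fin n, X a j * X u j *
          iteratedFDeriv ℝ 2 F X ![Matrix.single a i 1, Matrix.single u i 1])
        - (∑ a : Fin n, ∑ u : Fin n, X a i * X u j *
          iteratedFDeriv ℝ 2 F X ![Matrix.single a j 1, Matrix.single u i 1])
        - (∑ a : Fin n, ∑ u : Fin n, X a j * X u i *
          iteratedFDeriv ℝ 2 F X ![Matrix.single a i 1, Matrix.single u j 1])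
        - ((∑ a : Fin n, X a i * G a i) + (∑ a : Fin n, X a j * G a j)) := by
  set U := stiefelBasis₁ hpn Q i j with hU
  set K := Matrix.single i j (1:ℝ) - Matrix.single j i (1:ℝ) with hK
  have hUXK : U = X * K := basis1_eq_X hpn X Q hQX i j
  have hXU : Xᵀ * U = K := by
    rw [hUXK, ← Matrix.mul_assoc, hX, Matrix.one_mul]
  have hHess : iteratedFDeriv ℝ 2 F X ![U, U]
      = (∑ a : Fin n, ∑ u : Fin n, X a i * X u i *
          iteratedFDeriv ℝ 2 F X ![Matrix.single a j 1, Matrix.single u j 1])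
        - (∑ a : Fin n, ∑ u : Fin n, X a i * X u j *
          iteratedFDeriv ℝ 2 F X ![Matrix.single a j 1, Matrix.single u i 1])
        - ((∑ a : Fin n, ∑ u : Fin n, X a j * X u i *
          iteratedFDeriv ℝ 2 F X ![Matrix.single a i 1, Matrix.single u j 1])
          - (∑ a : Fin n, ∑ u : Fin n, X a j * X u j *
          iteratedFDeriv ℝ 2 F X ![Matrix.single a i 1, Matrix.single u i 1])) := by
    rw [hU, basis1_eq_sum hpn X Q hQX]
    rw [f2_subL, f2_subR, f2_subR]
    rw [f2_expand, f2_expand, f2_expand, f2_expand]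
  have hKK : K * K = -(Matrix.single i i (1:ℝ) + Matrix.single j j (1:ℝ)) := by
    rw [hK, Matrix.sub_mul, Matrix.mul_sub, Matrix.mul_sub, stdBM_mul, stdBM_mul, stdBM_mul,
      stdBM_mul, if_pos rfl, if_pos rfl, if_neg hij.symm, if_neg hij]
    abel
  have hTr1 : Matrix.trace (Gᵀ * U * Xᵀ * U)
      = -((∑ a : Fin n, X a i * G a i) + (∑ a : Fin n, X a j * G a j)) := by
    rw [Matrix.mul_assoc (Gᵀ * U), hXU, hUXK, ← Matrix.mul_assoc Gᵀ X K,
      Matrix.mul_assoc (Gᵀ * X) K K, hKK, Matrix.mul_neg, Matrix.mul_add,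
      Matrix.trace_neg, Matrix.trace_add, trace_mul_stdBM, trace_mul_stdBM]
    simp only [Matrix.mul_apply, Matrix.transpose_apply]
    rw [neg_inj]
    congr 1
    · exact Finset.sum_congr rfl fun a _ => mul_comm _ _
    · exact Finset.sum_congr rfl fun a _ => mul_comm _ _
  have hWU : ((1 : Matrix (Fin n) (Fin n) ℝ) - X * Xᵀ) * U = 0 := by
    rw [Matrix.sub_mul, Matrix.one_mul, Matrix.mul_assoc, hXU, ← hUXK, sub_self]
  have hTr2 : Matrix.trace ((Xᵀ * G + Gᵀ * X) * Uᵀ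
        * ((1 : Matrix (Fin n) (Fin n) ℝ) - X * Xᵀ) * U) = 0 := by
    rw [Matrix.mul_assoc ((Xᵀ * G + Gᵀ * X) * Uᵀ), hWU, Matrix.mul_zero, Matrix.trace_zero]
  rw [riemannianHessianQF, hHess, hTr1, hTr2]
  ring

/-- summing the Riemannian Hessian over the orthonormal basis `Λ` of the
tangent space yields the extrinsic representation of the Laplace–Beltrami operator of
the canonical metric applied to `F` at `X`. -/
theorem laplace_beltrami_extrinsic (n p : ℕ) (hp : 1 ≤ p) (hpn : p ≤ n)
    (F : Matrix (Fin n) (Fin p) ℝ → ℝ) (hF : ContDiff ℝ 2 F)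
    (X : Matrix (Fin n) (Fin p) ℝ) (hX : Xᵀ * X = 1)
    (Q : Matrix (Fin n) (Fin n) ℝ) (hQ : Qᵀ * Q = 1)
    (hQX : ∀ (i : Fin n) (j : Fin p), Q i (Fin.castLE hpn j) = X i j)
    (G : Matrix (Fin n) (Fin p) ℝ)
    (hG : ∀ (i : Fin n) (j : Fin p),
      G i j = fderiv ℝ F X (Matrix.single i j (1 : ℝ))) :
    (∑ i : Fin p, ∑ j : Fin p,
        if i < j then riemannianHessianQF F X G (stiefelBasis₁ hpn Q i j) else 0)
      + (∑ i : Fin n, ∑ j : Fin p,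
        if p ≤ (i : ℕ) then riemannianHessianQF F X G (stiefelBasis₂ Q i j) else 0)
    = (∑ i : Fin n, ∑ j : Fin p,
          iteratedFDeriv ℝ 2 F X
            ![Matrix.single i j (1 : ℝ), Matrix.single i j (1 : ℝ)])
      - (∑ i : Fin n, ∑ u : Fin n, ∑ j : Fin p, ∑ v : Fin p,
          X i v * X u j * iteratedFDeriv ℝ 2 F X
            ![Matrix.single i j (1 : ℝ), Matrix.single u v (1 : ℝ)])
      - ((n : ℝ) - 1) * ∑ i : Fin n, ∑ j : Fin p,
          X i j * fderiv ℝ F X (Matrix.single i j (1 : ℝ)) := by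
  classical
  have hp0 : 0 < p := hp
  -- notation
  set H : Fin n → Fin p → Fin n → Fin p → ℝ := fun a b u v =>
    iteratedFDeriv ℝ 2 F X ![Matrix.single a b 1, Matrix.single u v 1]
    with hHdef
  set ψ : Fin p → Fin p → Fin p → Fin p → ℝ := fun i j k l =>
    ∑ a : Fin n, ∑ u : Fin n, X a i * X u k * H a j u l with hψdef
  set d : Fin p → ℝ := fun i => ∑ a : Fin n, X a i * G a i with hddef
  set g : Fin n → Fin p → ℝ := fun i j =>
    ∑ a : Fin n, ∑ u : Fin n, Q a i * Q u i * H a j u j with hgdef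
  -- First sum
  have hL1 : (∑ i : Fin p, ∑ j : Fin p,
        if i < j then riemannianHessianQF F X G (stiefelBasis₁ hpn Q i j) else 0)
      = ((∑ i : Fin p, ∑ j : Fin p, ψ i j i j) - (∑ i : Fin p, ∑ j : Fin p, ψ i j j i))
        - (((p:ℝ) - 1) * ∑ i : Fin p, d i) := by
    have e1 : ∀ i j : Fin p,
        (if i < j then riemannianHessianQF F X G (stiefelBasis₁ hpn Q i j) else 0)
        = (if i < j then ((ψ i j i j - ψ i j j i) + (ψ j i j i - ψ j i i j)) else 0)
          - (if i < j then (d i + d j) else 0) := by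
      intro i j
      split_ifs with h
      · rw [riem_basis1 hpn F X hX Q hQX G i j h.ne]
        simp only [hψdef, hddef, hHdef]
        ring
      · ring
    simp only [e1]
    simp only [Finset.sum_sub_distrib]
    have c1 := sum_ite_lt (fun i j => ψ i j i j - ψ i j j i)
    have c2 := sum_ite_lt (fun i j : Fin p => d i)
    beta_reduce at c1 c2
    rw [c1, c2]
    simp only [sub_self, Finset.sum_const_zero, sub_zero]
    have c4 : ∑ i : Fin p, ∑ _j : Fin p, d i = (p:ℝ) * ∑ i : Fin p, d i := by
      simp [Finset.sum_const, Finset.card_univ, Finset.mul_sum, mul_comm]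
    rw [c4]
    simp only [Finset.sum_sub_distrib]
    ring
  -- rows of Q are orthonormal
  have hQrow : ∀ a u : Fin n, ∑ k : Fin n, Q a k * Q u k = if a = u then 1 else 0 := by
    intro a u
    have h1 : Q * Qᵀ = 1 := mul_eq_one_comm.mp hQ
    have := congrFun (congrFun h1 a) u
    simpa [Matrix.mul_apply, Matrix.transpose_apply, Matrix.one_apply] using this
  -- Second sum
  have hL2 : (∑ i : Fin n, ∑ j : Fin p,
        if p ≤ (i:ℕ) then riemannianHessianQF F X G (stiefelBasis₂ Q i j) else 0)
      = (∑ j : Fin p, ∑ a : Fin n, H a j a j) - (∑ i : Fin p, ∑ j : Fin p, ψ i j i j)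
        - (((n:ℝ) - (p:ℝ)) * ∑ i : Fin p, d i) := by
    have e2 : ∀ (i : Fin n) (j : Fin p),
        (if p ≤ (i:ℕ) then riemannianHessianQF F X G (stiefelBasis₂ Q i j) else 0)
        = (g i j - (if (i:ℕ) < p then g i j else 0)) - (if p ≤ (i:ℕ) then d j else 0) := by
      intro i j
      rcases le_or_gt p (i:ℕ) with h | h
      · rw [if_pos h, if_pos h, if_neg (not_lt.2 h), riem_basis2 hpn F X Q hQ hQX G i j h]
        simp only [hgdef, hddef, hHdef]
        ring
      · rw [if_neg (not_le.2 h), if_pos h, if_neg (not_le.2 h)]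
        ring
    simp only [e2]
    simp only [Finset.sum_sub_distrib]
    have t1 : ∑ i : Fin n, ∑ j : Fin p, g i j = ∑ j : Fin p, ∑ a : Fin n, H a j a j := by
      rw [Finset.sum_comm]
      refine Finset.sum_congr rfl fun j _ => ?_
      simp only [hgdef]
      rw [Finset.sum_comm]
      refine Finset.sum_congr rfl fun a _ => ?_
      rw [Finset.sum_comm]
      have inner : ∀ u : Fin n, ∑ i : Fin n, Q a i * Q u i * H a j u j
          = if a = u then H a j u j else 0 := by
        intro u
        rw [← Finset.sum_mul, hQrow, ite_mul, one_mul, zero_mul]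
      simp only [inner]
      simp [Finset.sum_ite_eq]
    have t2 : ∑ i : Fin n, ∑ j : Fin p, (if (i:ℕ) < p then g i j else 0)
        = ∑ i : Fin p, ∑ j : Fin p, ψ i j i j := by
      rw [Finset.sum_comm]
      have e4 : ∀ j : Fin p, ∑ i : Fin n, (if (i:ℕ) < p then g i j else 0)
          = ∑ i : Fin p, g (Fin.castLE hpn i) j := fun j => sum_fin_lt hp0 hpn _
      simp only [e4]
      rw [Finset.sum_comm]
      refine Finset.sum_congr rfl fun i _ => Finset.sum_congr rfl fun j _ => ?_
      simp only [hgdef, hψdef, hQX]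
    have t3 : ∑ i : Fin n, ∑ j : Fin p, (if p ≤ (i:ℕ) then d j else 0)
        = ((n:ℝ) - (p:ℝ)) * ∑ i : Fin p, d i := by
      rw [Finset.sum_comm]
      have e3 : ∀ (j : Fin p), ∑ i : Fin n, (if p ≤ (i:ℕ) then d j else 0)
          = ((n:ℝ) - (p:ℝ)) * d j := by
        intro j
        have e5 : ∀ i : Fin n, (if p ≤ (i:ℕ) then d j else 0)
            = d j - (if (i:ℕ) < p then d j else 0) := by
          intro i
          rcases le_or_gt p (i:ℕ) with h | h
          · rw [if_pos h, if_neg (not_lt.2 h), sub_zero]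
          · rw [if_neg (not_le.2 h), if_pos h, sub_self]
        simp only [e5, Finset.sum_sub_distrib]
        rw [sum_fin_lt hp0 hpn (fun _ => d j)]
        simp [Finset.sum_const, Finset.card_univ]
        ring
      simp only [e3]
      rw [← Finset.mul_sum]
    rw [t1, t2, t3]
  rw [hL1, hL2]
  -- identify the right-hand side pieces
  have hR1 : (∑ i : Fin n, ∑ j : Fin p,
      iteratedFDeriv ℝ 2 F X
        ![Matrix.single i j (1 : ℝ), Matrix.single i j (1 : ℝ)])
      = ∑ j : Fin p, ∑ a : Fin n, H a j a j := Finset.sum_comm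
  have hR2 : (∑ i : Fin p, ∑ j : Fin p, ψ i j j i)
      = (∑ i : Fin n, ∑ u : Fin n, ∑ j : Fin p, ∑ v : Fin p,
          X i v * X u j * iteratedFDeriv ℝ 2 F X
            ![Matrix.single i j (1 : ℝ), Matrix.single u v (1 : ℝ)]) := by
    have s1 : ∑ i : Fin p, ∑ j : Fin p, ψ i j j i
        = ∑ a : Fin n, ∑ u : Fin n, ∑ i : Fin p, ∑ j : Fin p, X a i * X u j * H a j u i :=
      sum_swap4 (fun i j a u => X a i * X u j * H a j u i)
    rw [s1]
    refine Finset.sum_congr rfl fun a _ => Finset.sum_congr rfl fun u _ => ?_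
    exact Finset.sum_comm
  have hR3 : (∑ i : Fin n, ∑ j : Fin p,
        X i j * fderiv ℝ F X (Matrix.single i j (1 : ℝ)))
      = ∑ i : Fin p, d i := by
    rw [Finset.sum_comm]
    simp only [hddef]
    refine Finset.sum_congr rfl fun j _ => Finset.sum_congr rfl fun i _ => ?_
    rw [hG i j]
  rw [hR1, ← hR2, hR3]
  ring
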